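/- Let G be a finite group and N a normal subgroup of G. Assume that (i) the inflation map H^2(G/N, ℚ/ℤ) → H^2(G, ℚ/ℤ) is not the zero map, and (ii) for every bicyclic subgroup A of G, the image of A in G/N (i.e., the subgroup AN/N) is cyclic. Then B_0(G) ≠ 0. -/

import Mathlib

/-- The coefficient group `ℚ/ℤ`. -/
abbrev QZ : Type := ℚ ⧸ AddSubgroup.zmultiples (1 : ℚ)

/-- A (inhomogeneous) 2-cocycle on `G` with values in `ℚ/ℤ` (trivial action). -/
def IsGrpCocycle {G : Type*} [Group G] (f : G → G → QZ) : Prop :=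
  ∀ g h k : G, f g h + f (g * h) k = f h k + f g (h * k)

/-- A 2-coboundary on `G` with values in `ℚ/ℤ` (trivial action). -/
def IsGrpCoboundary {G : Type*} [Group G] (f : G → G → QZ) : Prop :=
  ∃ c : G → QZ, ∀ g h : G, f g h = c g + c h - c (g * h)

/-- The additive group of 2-cocycles. -/
def cocycles2 (G : Type*) [Group G] : AddSubgroup (G → G → QZ) where
  carrier := {f | IsGrpCocycle f}
  zero_mem' := by intro g h k; simp
  add_mem' := by
    intro a b ha hb g h k
    simp only [Pi.add_apply]
    rw [add_add_add_comm, ha g h k, hb g h k, add_add_add_comm]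
  neg_mem' := by
    intro a ha g h k
    simp only [Pi.neg_apply, ← neg_add]
    rw [ha g h k]

/-- The subgroup of 2-coboundaries inside the group of 2-cocycles. -/
def coboundaries2 (G : Type*) [Group G] : AddSubgroup (cocycles2 G) where
  carrier := {f | IsGrpCoboundary (f : G → G → QZ)}
  zero_mem' := ⟨0, by intro g h; simp⟩
  add_mem' := by
    rintro a b ⟨c, hc⟩ ⟨d, hd⟩
    refine ⟨c + d, fun g h => ?_⟩
    have : ((a + b : cocycles2 G) : G → G → QZ) g h
        = (a : G → G → QZ) g h + (b : G → G → QZ) g h := rfl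
    rw [this, hc g h, hd g h]
    simp only [Pi.add_apply]
    abel
  neg_mem' := by
    rintro a ⟨c, hc⟩
    refine ⟨-c, fun g h => ?_⟩
    have : ((-a : cocycles2 G) : G → G → QZ) g h = -((a : G → G → QZ) g h) := rfl
    rw [this, hc g h]
    simp only [Pi.neg_apply]
    abel

/-- The second cohomology group `H²(G, ℚ/ℤ)` (trivial action), as cocycles mod coboundaries. -/
abbrev H2 (G : Type*) [Group G] : Type _ := cocycles2 G ⧸ coboundaries2 G

/-- A group is bicyclic if it is cyclic or the direct product of two cyclic groups. -/
def IsBicyclic (A : Type*) [Group A] : Prop :=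
  IsCyclic A ∨ ∃ B C : Subgroup A, IsCyclic B ∧ IsCyclic C ∧ Nonempty (A ≃* B × C)

/-- The restriction of `f` to every bicyclic subgroup is a coboundary. -/
def RestrictsToCoboundaries {G : Type*} [Group G] (f : G → G → QZ) : Prop :=
  ∀ A : Subgroup G, IsBicyclic A → IsGrpCoboundary (fun a b : A => f a b)

/-- The Bogomolov multiplier `B₀(G)`: the subgroup of `H²(G, ℚ/ℤ)` consisting of the classes
whose restriction to every bicyclic subgroup of `G` vanishes. -/
def B0 (G : Type*) [Group G] : AddSubgroup (H2 G) where
  carrier := {x | ∃ f : cocycles2 G,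
    (QuotientAddGroup.mk f : H2 G) = x ∧ RestrictsToCoboundaries (f : G → G → QZ)}
  zero_mem' := by
    refine ⟨0, rfl, fun A _ => ⟨0, fun a b => ?_⟩⟩
    simp
  add_mem' := by
    rintro x y ⟨f, rfl, hf⟩ ⟨g, rfl, hg⟩
    refine ⟨f + g, rfl, fun A hA => ?_⟩
    obtain ⟨c, hc⟩ := hf A hA
    obtain ⟨d, hd⟩ := hg A hA
    refine ⟨c + d, fun a b => ?_⟩
    have hc' : (f : G → G → QZ) (a : G) (b : G) = c a + c b - c (a * b) := hc a b
    have hd' : (g : G → G → QZ) (a : G) (b : G) = d a + d b - d (a * b) := hd a b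
    show ((f + g : cocycles2 G) : G → G → QZ) (a : G) (b : G)
        = (c + d) a + (c + d) b - (c + d) (a * b)
    have : ((f + g : cocycles2 G) : G → G → QZ) (a : G) (b : G)
        = (f : G → G → QZ) (a : G) (b : G) + (g : G → G → QZ) (a : G) (b : G) := rfl
    rw [this, hc', hd']
    simp only [Pi.add_apply]
    abel
  neg_mem' := by
    rintro x ⟨f, rfl, hf⟩
    refine ⟨-f, rfl, fun A hA => ?_⟩
    obtain ⟨c, hc⟩ := hf A hA
    refine ⟨-c, fun a b => ?_⟩
    have hc' : (f : G → G → QZ) (a : G) (b : G) = c a + c b - c (a * b) := hc a b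
    show ((-f : cocycles2 G) : G → G → QZ) (a : G) (b : G)
        = (-c) a + (-c) b - (-c) (a * b)
    have : ((-f : cocycles2 G) : G → G → QZ) (a : G) (b : G)
        = -((f : G → G → QZ) (a : G) (b : G)) := rfl
    rw [this, hc']
    simp only [Pi.neg_apply]
    abel


/-- The inflation of a function on `G/N` to `G`. -/
def inflate {G : Type*} [Group G] (N : Subgroup G) [N.Normal] (f : G ⧸ N → G ⧸ N → QZ) :
    G → G → QZ :=
  fun g h => f ((g : G) : G ⧸ N) ((h : G) : G ⧸ N)

/-- Partial sums `a i = ∑_{n < i} f (σ^n) σ`. -/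
def aseq {C : Type*} [Group C] (f : C → C → QZ) (σ : C) : ℕ → QZ
  | 0 => 0
  | n + 1 => aseq f σ n + f (σ ^ n) σ

lemma cocycle_right_one {C : Type*} [Group C] {f : C → C → QZ} (hf : IsGrpCocycle f)
    (g : C) : f g 1 = f 1 1 := by
  have := hf g 1 1
  simp only [mul_one] at this
  exact add_right_cancel this

lemma aseq_key {C : Type*} [Group C] {f : C → C → QZ} (hf : IsGrpCocycle f) (σ : C) :
    ∀ j i : ℕ, f (σ ^ i) (σ ^ j) = aseq f σ (i + j) - aseq f σ i - aseq f σ j + f 1 1 := by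
  intro j
  induction j with
  | zero =>
    intro i
    simp only [pow_zero, Nat.add_zero]
    rw [cocycle_right_one hf]
    show f 1 1 = aseq f σ i - aseq f σ i - aseq f σ 0 + f 1 1
    show f 1 1 = aseq f σ i - aseq f σ i - 0 + f 1 1
    abel
  | succ j ih =>
    intro i
    have hc := hf (σ ^ i) (σ ^ j) σ
    rw [← pow_add, ← pow_succ] at hc
    have h1 : f (σ ^ (i + j)) σ = aseq f σ (i + j + 1) - aseq f σ (i + j) := by
      show _ = aseq f σ (i + j) + f (σ ^ (i + j)) σ - aseq f σ (i + j)
      abel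
    have h2 : f (σ ^ j) σ = aseq f σ (j + 1) - aseq f σ j := by
      show _ = aseq f σ j + f (σ ^ j) σ - aseq f σ j
      abel
    have := ih i
    have h3 : f (σ ^ i) (σ ^ (j + 1)) =
        f (σ ^ i) (σ ^ j) + f (σ ^ (i + j)) σ - f (σ ^ j) σ :=
      eq_sub_of_add_eq' hc.symm
    have hn : i + (j + 1) = (i + j) + 1 := rfl
    rw [h3, ih i, h1, h2, hn]
    abel

/-- Every 2-cocycle on a finite cyclic group with values in `ℚ/ℤ` is a coboundary. -/
lemma cyclic_cocycle_is_coboundary {C : Type*} [Group C] [Finite C] [IsCyclic C]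
    {f : C → C → QZ} (hf : IsGrpCocycle f) : IsGrpCoboundary f := by
  obtain ⟨σ, hσ⟩ := IsCyclic.exists_monoid_generator (α := C)
  set m := orderOf σ with hm
  have hmpos : 0 < m := orderOf_pos σ
  -- shift property: aseq (i + m) = aseq i + aseq m
  have hshift : ∀ i : ℕ, aseq f σ (i + m) = aseq f σ i + aseq f σ m := by
    intro i
    have hk := aseq_key hf σ m i
    rw [pow_orderOf_eq_one σ, cocycle_right_one hf] at hk
    have h0 : aseq f σ (i + m) - aseq f σ i - aseq f σ m = 0 := right_eq_add.mp hk
    rw [sub_sub] at h0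
    exact sub_eq_zero.mp h0
  -- choose t with m • t = aseq f σ m
  obtain ⟨q, hq⟩ := QuotientAddGroup.mk_surjective (aseq f σ m)
  set t : QZ := QuotientAddGroup.mk (q / (m : ℚ)) with ht
  have hm0 : (m : ℚ) ≠ 0 := Nat.cast_ne_zero.mpr hmpos.ne'
  have hmt : m • t = aseq f σ m := by
    have h1 : m • t = QuotientAddGroup.mk (m • (q / (m : ℚ))) :=
      (map_nsmul (QuotientAddGroup.mk' (AddSubgroup.zmultiples (1 : ℚ))) m (q / (m : ℚ))).symm
    have h2 : m • (q / (m : ℚ)) = q := by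
      rw [nsmul_eq_mul]
      field_simp
    rw [h1, h2, hq]
  -- the function d
  set d : ℕ → QZ := fun i => (i : ℕ) • t - aseq f σ i with hd
  have hdstep : ∀ i : ℕ, d (i + m) = d i := by
    intro i
    simp only [hd, hshift i, add_nsmul, hmt]
    abel
  have hdmul : ∀ k i : ℕ, d (i + k * m) = d i := by
    intro k
    induction k with
    | zero => intro i; simp
    | succ k ih =>
      intro i
      have : i + (k + 1) * m = (i + k * m) + m := by ring
      rw [this, hdstep, ih]
  have hdmod : ∀ i : ℕ, d i = d (i % m) := by
    intro i
    conv_lhs => rw [← Nat.mod_add_div' i m]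
    rw [hdmul]
  have hdeq : ∀ i j : ℕ, σ ^ i = σ ^ j → d i = d j := by
    intro i j hij
    rw [hdmod i, hdmod j]
    have : i % orderOf σ = j % orderOf σ := (pow_eq_pow_iff_modEq.mp hij)
    rw [← hm] at this
    rw [this]
  -- choose exponents
  have hex : ∀ x : C, ∃ n : ℕ, σ ^ n = x := fun x => (Submonoid.mem_powers_iff x σ).mp (hσ x)
  choose nn hnn using hex
  refine ⟨fun x => f 1 1 + d (nn x), fun g h => ?_⟩
  show f g h = f 1 1 + d (nn g) + (f 1 1 + d (nn h)) - (f 1 1 + d (nn (g * h)))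
  have hg : σ ^ nn g = g := hnn g
  have hh : σ ^ nn h = h := hnn h
  have hgh : σ ^ nn (g * h) = σ ^ (nn g + nn h) := by
    rw [hnn (g * h), pow_add, hg, hh]
  have hdk : d (nn (g * h)) = d (nn g + nn h) := hdeq _ _ hgh
  have hkey : f g h = aseq f σ (nn g + nn h) - aseq f σ (nn g) - aseq f σ (nn h) + f 1 1 := by
    conv_lhs => rw [← hg, ← hh]
    exact aseq_key hf σ (nn h) (nn g)
  rw [hkey, hdk]
  simp only [hd, add_nsmul]
  abel

/-- Let `G` be a finite group and `N` a normal subgroup such that (i) the inflation map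
`H²(G/N, ℚ/ℤ) → H²(G, ℚ/ℤ)` is not the zero map, and (ii) the image in `G/N` of every
bicyclic subgroup of `G` is cyclic. Then `B₀(G) ≠ 0`. -/
theorem B0_ne_bot_of_inflation (G : Type) [Group G] [Finite G] (N : Subgroup G) [N.Normal]
    (hinf : ∃ f : cocycles2 (G ⧸ N), ¬ IsGrpCoboundary (inflate N (f : G ⧸ N → G ⧸ N → QZ)))
    (hbi : ∀ A : Subgroup G, IsBicyclic A → IsCyclic ↥(A.map (QuotientGroup.mk' N))) :
    B0 G ≠ ⊥ := by
  obtain ⟨f, hf⟩ := hinf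
  -- the inflated cocycle on G
  have hFcoc : IsGrpCocycle (inflate N (f : G ⧸ N → G ⧸ N → QZ)) := by
    intro g h k
    have := (f : cocycles2 (G ⧸ N)).2 ((g : G ⧸ N)) ((h : G ⧸ N)) ((k : G ⧸ N))
    simpa [inflate, QuotientGroup.mk_mul] using this
  set F : cocycles2 G := ⟨inflate N (f : G ⧸ N → G ⧸ N → QZ), hFcoc⟩ with hFdef
  have hmem : (QuotientAddGroup.mk F : H2 G) ∈ B0 G := by
    refine ⟨F, rfl, fun A hA => ?_⟩
    -- the image of A in G/N
    set C : Subgroup (G ⧸ N) := A.map (QuotientGroup.mk' N) with hC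
    have hCcyc : IsCyclic ↥C := hbi A hA
    -- restrict f to C
    set fC : ↥C → ↥C → QZ := fun c₁ c₂ => (f : G ⧸ N → G ⧸ N → QZ) c₁ c₂ with hfC
    have hfCcoc : IsGrpCocycle fC := by
      intro g h k
      have := (f : cocycles2 (G ⧸ N)).2 ((g : G ⧸ N)) ((h : G ⧸ N)) ((k : G ⧸ N))
      simpa [hfC] using this
    obtain ⟨c, hc⟩ := cyclic_cocycle_is_coboundary hfCcoc
    -- the map A → C
    have hπmem : ∀ a : A, ((a : G) : G ⧸ N) ∈ C := fun a => ⟨(a : G), a.2, rfl⟩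
    set π : A → ↥C := fun a => ⟨((a : G) : G ⧸ N), hπmem a⟩ with hπ
    have hπmul : ∀ a b : A, π (a * b) = π a * π b := by
      intro a b
      simp only [hπ]
      ext
      simp [QuotientGroup.mk_mul]
    refine ⟨fun a => c (π a), fun a b => ?_⟩
    show (F : G → G → QZ) (a : G) (b : G) = c (π a) + c (π b) - c (π (a * b))
    rw [hπmul a b]
    exact hc (π a) (π b)
  intro hbot
  have h0 : (QuotientAddGroup.mk F : H2 G) = 0 := by
    rw [hbot] at hmem
    simpa using hmem
  have : F ∈ coboundaries2 G := (QuotientAddGroup.eq_zero_iff F).mp h0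
  exact hf this
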